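/- Let f, g : ℝⁿ → ℝ be twice continuously differentiable and strongly convex, and let θ(λ) be the unique minimizer of L(θ,λ) = f(θ) + λ·g(θ). If λ ↦ θ(λ) is differentiable and ∇g(θ(λ)) ≠ 0, then the composite function λ ↦ g(θ(λ)) has strictly negative derivative: d/dλ [g(θ(λ))] = -∇g(θ(λ))ᵀ [∇²_θ L(θ(λ),λ)]⁻¹ ∇g(θ(λ)) < 0. -/

import Mathlib

open RealInnerProductSpace


section Aux
variable {n : ℕ}

local notation "E" => EuclideanSpace ℝ (Fin n)

lemma aux_line_deriv (h : E → ℝ) (hd : Differentiable ℝ h)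
    (y v : E) (t : ℝ) :
    HasDerivAt (fun s : ℝ => h (y + s • v)) ⟪gradient h (y + t • v), v⟫ t := by
  have hline : HasDerivAt (fun s : ℝ => y + s • v) v t := by
    simpa using ((hasDerivAt_id t).smul_const v).const_add y
  have := ((hd (y + t • v)).hasGradientAt.hasFDerivAt).comp_hasDerivAt t hline
  simpa [InnerProductSpace.toDual_apply_apply, Function.comp_def] using this

lemma aux_strong_mono {m : ℝ} (h : E → ℝ) (hd : Differentiable ℝ h)
    (hsc : StrongConvexOn Set.univ m h) (x y : E) :
    m * ‖x - y‖ ^ 2 ≤ ⟪gradient h x - gradient h y, x - y⟫ := by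
  set v := x - y with hv
  set φ : ℝ → ℝ := fun t => h (y + t • v) - m / 2 * t ^ 2 * ‖v‖ ^ 2 with hφ
  have hφd : ∀ t : ℝ, HasDerivAt φ (⟪gradient h (y + t • v), v⟫ - m * t * ‖v‖ ^ 2) t := by
    intro t
    have h1 := aux_line_deriv h hd y v t
    have h2 : HasDerivAt (fun t : ℝ => m / 2 * t ^ 2 * ‖v‖ ^ 2) (m * t * ‖v‖ ^ 2) t := by
      have := ((hasDerivAt_pow 2 t).const_mul (m / 2)).mul_const (‖v‖ ^ 2)
      refine this.congr_deriv ?_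
      ring
    exact h1.sub h2
  have hφc : ConvexOn ℝ Set.univ φ := by
    refine ⟨convex_univ, ?_⟩
    intro a _ b _ p q hp hq hpq
    have key := hsc.2 (Set.mem_univ (y + a • v)) (Set.mem_univ (y + b • v)) hp hq hpq
    have e1 : p • (y + a • v) + q • (y + b • v) = y + (p * a + q * b) • v := by
      have h0 : p + q = (1:ℝ) := hpq
      match_scalars <;> simp <;> linarith
    have e2 : ‖a • v - b • v‖ ^ 2 = (a - b) ^ 2 * ‖v‖ ^ 2 := by
      have e3 : a • v - b • v = (a - b) • v := by
        rw [sub_smul]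
      rw [e3, norm_smul, mul_pow, Real.norm_eq_abs, sq_abs]
    rw [e1] at key
    have hq' : q = 1 - p := by linarith
    simp only [smul_eq_mul, hφ]
    have key2 : h (y + (p * a + q * b) • v)
        ≤ p * h (y + a • v) + q * h (y + b • v)
          - p * q * (m / 2 * ((a - b) ^ 2 * ‖v‖ ^ 2)) := by
      simpa [e2, smul_eq_mul] using key
    subst hq'
    nlinarith [key2]
  have hmono := hφc.monotoneOn_deriv (fun x _ => (hφd x).differentiableAt)
    (Set.mem_univ (0:ℝ)) (Set.mem_univ (1:ℝ)) zero_le_one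
  rw [(hφd 0).deriv, (hφd 1).deriv] at hmono
  have hx : y + (1:ℝ) • v = x := by rw [one_smul, hv]; abel
  have hy : y + (0:ℝ) • v = y := by simp
  rw [hx, hy] at hmono
  rw [inner_sub_left]
  simp only [mul_zero, zero_mul, mul_one, sub_zero] at hmono
  linarith

lemma aux_hess_lb {m : ℝ} (h : E → ℝ) (hd : Differentiable ℝ h)
    (hsc : StrongConvexOn Set.univ m h)
    (x₀ : E) (H' : E →L[ℝ] E)
    (hH' : HasFDerivAt (fun z => gradient h z) H' x₀) (u : E) :
    m * ‖u‖ ^ 2 ≤ ⟪H' u, u⟫ := by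
  have hline : HasDerivAt (fun s : ℝ => x₀ + s • u) u 0 := by
    simpa using ((hasDerivAt_id (0:ℝ)).smul_const u).const_add x₀
  have hcomp : HasDerivAt (fun t : ℝ => gradient h (x₀ + t • u)) (H' u) 0 := by
    have h0 : x₀ + (0:ℝ) • u = x₀ := by simp
    exact (by rw [h0]; exact hH' : HasFDerivAt (fun z => gradient h z) H' (x₀ + (0:ℝ) • u)).comp_hasDerivAt 0 hline
  set ψ : ℝ → ℝ := fun t => ⟪gradient h (x₀ + t • u), u⟫ with hψdef
  have hψ : HasDerivAt ψ ⟪H' u, u⟫ 0 := by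
    have := hcomp.inner ℝ (hasDerivAt_const (0:ℝ) u); simp only [inner_zero_right, zero_add] at this; exact this
  have hslope : Filter.Tendsto (slope ψ 0) (nhdsWithin 0 (Set.Ioi 0)) (nhds ⟪H' u, u⟫) :=
    (hasDerivAt_iff_tendsto_slope.mp hψ).mono_left
      (nhdsWithin_mono 0 (fun t ht => ne_of_gt ht))
  refine ge_of_tendsto hslope ?_
  filter_upwards [self_mem_nhdsWithin] with t (ht : 0 < t)
  have key := aux_strong_mono h hd hsc (x₀ + t • u) x₀
  have e1 : (x₀ + t • u) - x₀ = t • u := by abel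
  rw [e1, norm_smul, mul_pow, Real.norm_eq_abs, sq_abs, inner_sub_left,
    real_inner_smul_right, real_inner_smul_right] at key
  rw [slope_def_field, hψdef]
  simp only [sub_zero, zero_smul, add_zero]
  rw [le_div_iff₀ ht]
  nlinarith [key]

end Aux

/-- If `λ ↦ θ(λ)` is differentiable and `∇g(θ(λ)) ≠ 0`, then
`d/dλ [g(θ(λ))] = -⟪∇g(θ(λ)), [∇²_θ L(θ(λ),λ)]⁻¹ ∇g(θ(λ))⟫ < 0`. -/
theorem stmt_3 {n : ℕ} (f g : EuclideanSpace ℝ (Fin n) → ℝ)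
    (hf : ContDiff ℝ 2 f) (hg : ContDiff ℝ 2 g)
    (hfc : ∃ m > (0:ℝ), StrongConvexOn Set.univ m f)
    (hgc : ∃ m > (0:ℝ), StrongConvexOn Set.univ m g)
    (θ : ℝ → EuclideanSpace ℝ (Fin n))
    (hθ : ∀ lam ≥ (0:ℝ), ∀ θ', θ' ≠ θ lam →
      f (θ lam) + lam * g (θ lam) < f θ' + lam * g θ')
    (hθd : Differentiable ℝ θ)
    (H : ℝ → (EuclideanSpace ℝ (Fin n) ≃L[ℝ] EuclideanSpace ℝ (Fin n)))
    (hH : ∀ lam : ℝ, (H lam : EuclideanSpace ℝ (Fin n) →L[ℝ] EuclideanSpace ℝ (Fin n)) =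
      fderiv ℝ (fun θ' => gradient f θ' + lam • gradient g θ') (θ lam))
    (lam : ℝ) (hlam : 0 ≤ lam)
    (hgrad : gradient g (θ lam) ≠ 0) :
    HasDerivAt (fun l => g (θ l))
      (-⟪gradient g (θ lam), (H lam).symm (gradient g (θ lam))⟫) lam ∧
    -⟪gradient g (θ lam), (H lam).symm (gradient g (θ lam))⟫ < 0 := by
  obtain ⟨mf, hmf, hfsc⟩ := hfc
  obtain ⟨mg, hmg, hgsc⟩ := hgc
  have hfd : Differentiable ℝ f := hf.differentiable (by norm_num)
  have hgd : Differentiable ℝ g := hg.differentiable (by norm_num)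
  -- gradient of the Lagrangian
  have hgradL : ∀ (l : ℝ) (z : EuclideanSpace ℝ (Fin n)),
      HasGradientAt (fun w => f w + l * g w) (gradient f z + l • gradient g z) z := by
    intro l z
    have h1 := (hfd z).hasGradientAt.hasFDerivAt
    have h2 := (hgd z).hasGradientAt.hasFDerivAt
    have h3 : HasFDerivAt (fun w => f w + l * g w)
        ((InnerProductSpace.toDual ℝ _) (gradient f z + l • gradient g z)) z := by
      have h4 := h1.add (h2.const_mul l)
      refine h4.congr_fderiv ?_
      simp [map_add, map_smul]
    have := h3.hasGradientAt; rwa [LinearIsometryEquiv.symm_apply_apply] at this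
  -- stationarity on [0, ∞)
  have hstat : ∀ l ≥ (0:ℝ), gradient f (θ l) + l • gradient g (θ l) = 0 := by
    intro l hl
    have hmin : IsLocalMin (fun w => f w + l * g w) (θ l) := by
      apply Filter.Eventually.of_forall
      intro y
      rcases eq_or_ne y (θ l) with rfl | hne
      · exact le_rfl
      · exact (hθ l hl y hne).le
    have h0 := hmin.hasFDerivAt_eq_zero (hgradL l (θ l)).hasFDerivAt
    have := congrArg (InnerProductSpace.toDual ℝ (EuclideanSpace ℝ (Fin n))).symm h0
    rwa [LinearIsometryEquiv.symm_apply_apply, map_zero] at this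
  -- smoothness of gradients
  have hgf : ContDiff ℝ 1 (fun z => gradient f z) :=
    (LinearIsometryEquiv.contDiff _).comp (hf.fderiv_right (by norm_num))
  have hgg : ContDiff ℝ 1 (fun z => gradient g z) :=
    (LinearIsometryEquiv.contDiff _).comp (hg.fderiv_right (by norm_num))
  have hgfd : Differentiable ℝ (fun z => gradient f z) := hgf.differentiable one_ne_zero
  have hggd : Differentiable ℝ (fun z => gradient g z) := hgg.differentiable one_ne_zero
  -- the Hessian as the fderiv at θ lam
  have hHf : HasFDerivAt (fun z => gradient f z + lam • gradient g z)
      (H lam : EuclideanSpace ℝ (Fin n) →L[ℝ] EuclideanSpace ℝ (Fin n)) (θ lam) := by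
    rw [hH lam]
    exact ((hgfd (θ lam)).add ((hggd (θ lam)).const_smul lam)).hasFDerivAt
  -- strong convexity of the Lagrangian
  have hLsc : StrongConvexOn Set.univ mf (fun z => f z + lam * g z) := by
    have hgconv : ConvexOn ℝ Set.univ (fun z => lam * g z) := by
      have h5 := (hgsc.convexOn (fun r => by positivity)).smul hlam
      simpa [smul_eq_mul] using h5
    have h6 := hfsc.add hgconv.uniformConvexOn_zero
    have h7 : ((fun r : ℝ => mf / 2 * r ^ 2) + 0) = fun r : ℝ => mf / 2 * r ^ 2 := by
      funext r; simp
    rw [h7] at h6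
    exact h6
  -- Hessian lower bound
  have hkey : ∀ u : EuclideanSpace ℝ (Fin n),
      mf * ‖u‖ ^ 2 ≤ ⟪(H lam : EuclideanSpace ℝ (Fin n) →L[ℝ] EuclideanSpace ℝ (Fin n)) u, u⟫ := by
    intro u
    have hΦeq : (fun z => gradient (fun w => f w + lam * g w) z)
        = fun z => gradient f z + lam • gradient g z :=
      funext fun z => (hgradL lam z).gradient
    have hFD : HasFDerivAt (fun z => gradient (fun w => f w + lam * g w) z)
        (H lam : EuclideanSpace ℝ (Fin n) →L[ℝ] EuclideanSpace ℝ (Fin n)) (θ lam) := by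
      rw [hΦeq]; exact hHf
    exact aux_hess_lb _ (hfd.add (hgd.const_mul lam)) hLsc (θ lam) _ hFD u
  -- derivative of Ψ
  have hθder : HasDerivAt θ (deriv θ lam) lam := (hθd lam).hasDerivAt
  set td := deriv θ lam with htddef
  have hA : HasDerivAt (fun l => gradient f (θ l))
      (fderiv ℝ (fun z => gradient f z) (θ lam) td) lam :=
    ((hgfd (θ lam)).hasFDerivAt).comp_hasDerivAt lam hθder
  have hB : HasDerivAt (fun l => gradient g (θ l))
      (fderiv ℝ (fun z => gradient g z) (θ lam) td) lam :=
    ((hggd (θ lam)).hasFDerivAt).comp_hasDerivAt lam hθder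
  have hB2 : HasDerivAt (fun l => l • gradient g (θ l))
      (gradient g (θ lam) + lam • fderiv ℝ (fun z => gradient g z) (θ lam) td) lam := by
    have h20 := (hasDerivAt_id lam).smul hB
    simp only [id_eq, one_smul] at h20
    refine h20.congr_deriv ?_
    abel
  have hΨ : HasDerivAt (fun l => gradient f (θ l) + l • gradient g (θ l))
      (fderiv ℝ (fun z => gradient f z) (θ lam) td
        + (gradient g (θ lam) + lam • fderiv ℝ (fun z => gradient g z) (θ lam) td)) lam :=
    hA.add hB2
  -- the derivative is zero by stationarity on Ici 0
  have hD0 : fderiv ℝ (fun z => gradient f z) (θ lam) td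
      + (gradient g (θ lam) + lam • fderiv ℝ (fun z => gradient g z) (θ lam) td) = 0 := by
    have hw := hΨ.hasDerivWithinAt (s := Set.Ici (0:ℝ))
    have hz : HasDerivWithinAt (fun l => gradient f (θ l) + l • gradient g (θ l))
        0 (Set.Ici (0:ℝ)) lam := by
      refine (hasDerivWithinAt_const lam _ (0 : EuclideanSpace ℝ (Fin n))).congr ?_ ?_
      · intro y hy; exact hstat y hy
      · exact hstat lam hlam
    have hu := uniqueDiffOn_Ici (0:ℝ) lam hlam
    rw [← hw.derivWithin hu, hz.derivWithin hu]
  -- express H lam applied to td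
  have hHtd : (H lam : EuclideanSpace ℝ (Fin n) →L[ℝ] EuclideanSpace ℝ (Fin n)) td
      = fderiv ℝ (fun z => gradient f z) (θ lam) td
        + lam • fderiv ℝ (fun z => gradient g z) (θ lam) td := by
    rw [hH lam, fderiv_fun_add (g := fun z => lam • gradient g z) (hgfd (θ lam)) ((hggd (θ lam)).const_smul lam),
      fderiv_fun_const_smul (hggd (θ lam)) lam]
    simp
  have hHtd0 : (H lam : EuclideanSpace ℝ (Fin n) →L[ℝ] EuclideanSpace ℝ (Fin n)) td
      = -gradient g (θ lam) := by
    rw [hHtd]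
    have h21 : (fderiv ℝ (fun z => gradient f z) (θ lam) td
        + lam • fderiv ℝ (fun z => gradient g z) (θ lam) td) + gradient g (θ lam) = 0 := by
      rw [← hD0]; abel
    exact eq_neg_of_add_eq_zero_left h21
  have htd : td = -(H lam).symm (gradient g (θ lam)) := by
    have h8 : (H lam) td = -gradient g (θ lam) := by
      rw [← hHtd0]; rfl
    have := congrArg (H lam).symm h8
    simpa [map_neg] using this
  -- derivative of g ∘ θ
  have hgθ : HasDerivAt (fun l => g (θ l)) ⟪gradient g (θ lam), td⟫ lam := by
    have := ((hgd (θ lam)).hasGradientAt.hasFDerivAt).comp_hasDerivAt lam hθder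
    simpa [InnerProductSpace.toDual_apply_apply, Function.comp_def] using this
  have hval : ⟪gradient g (θ lam), td⟫
      = -⟪gradient g (θ lam), (H lam).symm (gradient g (θ lam))⟫ := by
    rw [htd, inner_neg_right]
  constructor
  · rw [← hval]; exact hgθ
  · set v := gradient g (θ lam)
    set u := (H lam).symm v with hudef
    have hu0 : u ≠ 0 := by
      intro h9
      apply hgrad
      have := congrArg (H lam) h9
      simpa [hudef] using this
    have hHu : (H lam : EuclideanSpace ℝ (Fin n) →L[ℝ] EuclideanSpace ℝ (Fin n)) u = v := by
      simp [hudef]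
    have h10 := hkey u
    rw [hHu] at h10
    have h11 : (0:ℝ) < mf * ‖u‖ ^ 2 := by
      have : 0 < ‖u‖ := norm_pos_iff.mpr hu0
      positivity
    have h12 : 0 < ⟪v, u⟫ := lt_of_lt_of_le h11 h10
    linarith
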